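/- arXiv:1111.0363 — 2 statements merged into one kernel-verified Lean document; each statement's English description precedes it below -/
import Mathlib

section
/- For λ > 0 and all real u, v ∈ (-1,1), ∫_{-1}^{1} D_λ(v, u, p) (1-p²)^λ dp = 2^{2λ} B(λ+1/2, λ+1/2), where B is the Beta function. -/
open Real intervalIntegral

/-- The kernel `D_λ(v, p, u)` of Xu, equal to
`(1 - v² - p² - u² + 2upv)^{λ-1/2} / [(1-v²)(1-u²)(1-p²)]^λ` when
`1 - v² - p² - u² + 2upv ≥ 0` and `0` otherwise. -/
noncomputable def Dker (lam v p u : ℝ) : ℝ :=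
  if 0 ≤ 1 - v ^ 2 - p ^ 2 - u ^ 2 + 2 * u * p * v then
    (1 - v ^ 2 - p ^ 2 - u ^ 2 + 2 * u * p * v) ^ (lam - 1 / 2) /
      ((1 - v ^ 2) * (1 - u ^ 2) * (1 - p ^ 2)) ^ lam
  else 0

/-- The real Beta integral in terms of the real Gamma function. -/
lemma realBeta (a b : ℝ) (ha : 0 < a) (hb : 0 < b) :
    ∫ x in (0:ℝ)..1, x ^ (a - 1) * (1 - x) ^ (b - 1) =
      Real.Gamma a * Real.Gamma b / Real.Gamma (a + b) := by
  have hab : 0 < Real.Gamma (a + b) := Real.Gamma_pos_of_pos (by linarith)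
  have hC : Complex.Gamma a * Complex.Gamma b =
      Complex.Gamma ((a : ℂ) + b) * Complex.betaIntegral a b :=
    Complex.Gamma_mul_Gamma_eq_betaIntegral (by simpa using ha) (by simpa using hb)
  have hbeta : Complex.betaIntegral (a : ℂ) (b : ℂ) =
      ((∫ x in (0:ℝ)..1, x ^ (a - 1) * (1 - x) ^ (b - 1) : ℝ) : ℂ) := by
    rw [Complex.betaIntegral, ← intervalIntegral.integral_ofReal]
    refine intervalIntegral.integral_congr fun x hx => ?_
    rw [Set.uIcc_of_le (by norm_num : (0:ℝ) ≤ 1)] at hx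
    push_cast
    rw [Complex.ofReal_cpow hx.1, Complex.ofReal_cpow (by linarith [hx.2] : (0:ℝ) ≤ 1 - x)]
    push_cast
    ring
  rw [hbeta, ← Complex.ofReal_add, Complex.Gamma_ofReal, Complex.Gamma_ofReal,
    Complex.Gamma_ofReal] at hC
  have h2 : Real.Gamma a * Real.Gamma b =
      Real.Gamma (a + b) * ∫ x in (0:ℝ)..1, x ^ (a - 1) * (1 - x) ^ (b - 1) := by
    exact_mod_cast hC
  field_simp
  linarith [h2]

/-- The key one-dimensional integral. -/
lemma integral_one_sub_sq_rpow (lam : ℝ) (hlam : 0 < lam) :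
    ∫ t in (-1:ℝ)..1, (1 - t ^ 2) ^ (lam - 1 / 2) =
      2 ^ (2 * lam) *
        (Real.Gamma (lam + 1 / 2) * Real.Gamma (lam + 1 / 2) /
          Real.Gamma (lam + 1 / 2 + (lam + 1 / 2))) := by
  have hsub := intervalIntegral.smul_integral_comp_mul_add
    (f := fun t : ℝ => (1 - t ^ 2) ^ (lam - 1 / 2)) (a := 0) (b := 1) 2 (-1)
  have h1 : ∫ t in (-1:ℝ)..1, (1 - t ^ 2) ^ (lam - 1 / 2) =
      2 * ∫ x in (0:ℝ)..1, (1 - (2 * x + -1) ^ 2) ^ (lam - 1 / 2) := by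
    have hb : (∫ x in (2*0 + -1 : ℝ)..(2*1 + -1), (1 - x ^ 2) ^ (lam - 1 / 2)) =
        ∫ t in (-1:ℝ)..1, (1 - t ^ 2) ^ (lam - 1 / 2) := by norm_num
    rw [← hb, ← hsub, smul_eq_mul]
  have h2 : ∫ x in (0:ℝ)..1, (1 - (2 * x + -1) ^ 2) ^ (lam - 1 / 2) =
      (4:ℝ) ^ (lam - 1 / 2) *
        ∫ x in (0:ℝ)..1, x ^ (lam + 1 / 2 - 1) * (1 - x) ^ (lam + 1 / 2 - 1) := by
    rw [← intervalIntegral.integral_const_mul]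
    refine intervalIntegral.integral_congr fun x hx => ?_
    rw [Set.uIcc_of_le (by norm_num : (0:ℝ) ≤ 1)] at hx
    have hx0 : 0 ≤ x := hx.1
    have hx1 : 0 ≤ 1 - x := by linarith [hx.2]
    have hfac : 1 - (2 * x + -1) ^ 2 = 4 * (x * (1 - x)) := by ring
    rw [hfac, Real.mul_rpow (by norm_num) (mul_nonneg hx0 hx1), Real.mul_rpow hx0 hx1]
    have he : lam + 1 / 2 - 1 = lam - 1 / 2 := by ring
    rw [he]
  rw [h1, h2, realBeta (lam + 1/2) (lam + 1/2) (by linarith) (by linarith)]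
  have h4 : (2:ℝ) * (4:ℝ) ^ (lam - 1 / 2) = 2 ^ (2 * lam) := by
    have h40 : (4:ℝ) = (2:ℝ) ^ (2:ℝ) := by
      rw [show (2:ℝ) = ((2:ℕ):ℝ) by norm_num, Real.rpow_natCast]; norm_num
    rw [h40, ← Real.rpow_mul (by norm_num : (0:ℝ) ≤ 2)]
    nth_rewrite 1 [show (2:ℝ) = (2:ℝ) ^ (1:ℝ) by rw [Real.rpow_one]]
    rw [← Real.rpow_add (by norm_num : (0:ℝ) < 2),
      show (1:ℝ) + 2 * (lam - 1/2) = 2 * lam by ring]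
  rw [← mul_assoc, h4]

set_option maxHeartbeats 1600000 in
/-- For `λ > 0` and `u, v ∈ (-1,1)`,
`∫_{-1}^1 D_λ(v,u,p) (1-p²)^λ dp = 2^{2λ} B(λ+1/2, λ+1/2)`. -/
theorem integral_Dker (lam : ℝ) (hlam : 0 < lam) (u v : ℝ)
    (hu : u ∈ Set.Ioo (-1 : ℝ) 1) (hv : v ∈ Set.Ioo (-1 : ℝ) 1) :
    ∫ p in (-1 : ℝ)..1, Dker lam v u p * (1 - p ^ 2) ^ lam =
      2 ^ (2 * lam) *
        (Real.Gamma (lam + 1 / 2) * Real.Gamma (lam + 1 / 2) /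
          Real.Gamma (lam + 1 / 2 + (lam + 1 / 2))) := by
  obtain ⟨hu1, hu2⟩ := hu
  obtain ⟨hv1, hv2⟩ := hv
  have hu2' : 0 < 1 - u ^ 2 := by nlinarith
  have hv2' : 0 < 1 - v ^ 2 := by nlinarith
  set c : ℝ := u * v with hc
  set A : ℝ := (1 - v ^ 2) * (1 - u ^ 2) with hA
  have hApos : 0 < A := mul_pos hv2' hu2'
  set s : ℝ := Real.sqrt A with hsdef
  have hs : 0 < s := Real.sqrt_pos.mpr hApos
  have hs2 : s ^ 2 = A := Real.sq_sqrt hApos.le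
  have hcu : c < 1 := by nlinarith
  have hcl : -1 < c := by nlinarith
  have hub : c + s ≤ 1 := by nlinarith [hs2, hs, sq_nonneg (u - v)]
  have hlb : -1 ≤ c - s := by nlinarith [hs2, hs, sq_nonneg (u + v)]
  set h : ℝ → ℝ := fun p => (s ^ 2 - (p - c) ^ 2) ^ (lam - 1 / 2) / A ^ lam with hh
  -- step 1: reduce to integral over (c-s, c+s)
  have step1 : ∫ p in (-1:ℝ)..1, Dker lam v u p * (1 - p ^ 2) ^ lam =
      ∫ p in (c - s)..(c + s), h p := by
    have hle : (-1:ℝ) ≤ 1 := by norm_num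
    have hle2 : c - s ≤ c + s := by linarith
    rw [intervalIntegral.integral_of_le hle, intervalIntegral.integral_of_le hle2]
    have hsub : Set.Ioc (c - s) (c + s) ⊆ Set.Ioc (-1:ℝ) 1 :=
      Set.Ioc_subset_Ioc (by linarith) (by linarith)
    rw [show ∫ p in Set.Ioc (c-s) (c+s), h p =
        ∫ p in Set.Ioc (-1:ℝ) 1, (Set.Ioc (c-s) (c+s)).indicator h p by
      rw [MeasureTheory.setIntegral_indicator measurableSet_Ioc,
        Set.inter_eq_self_of_subset_right hsub]]
    refine MeasureTheory.setIntegral_congr_ae measurableSet_Ioc ?_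
    have hae1 : ∀ᵐ p : ℝ, p ≠ c - s :=
      MeasureTheory.compl_mem_ae_iff.mpr (MeasureTheory.measure_singleton (c - s))
    have hae2 : ∀ᵐ p : ℝ, p ≠ c + s :=
      MeasureTheory.compl_mem_ae_iff.mpr (MeasureTheory.measure_singleton (c + s))
    filter_upwards [hae1, hae2] with p hp1 hp2 hp
    have hQ : 1 - v ^ 2 - u ^ 2 - p ^ 2 + 2 * p * u * v = s ^ 2 - (p - c) ^ 2 := by
      rw [hs2, hA, hc]; ring
    by_cases hmem : p ∈ Set.Ioc (c - s) (c + s)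
    · have hplt : p < c + s := lt_of_le_of_ne hmem.2 hp2
      have hQpos : 0 < s ^ 2 - (p - c) ^ 2 := by
        have := mul_pos (show 0 < s - (p - c) by linarith [hplt])
          (show 0 < s + (p - c) by linarith [hmem.1])
        nlinarith [this]
      have hp1' : -1 < p := by linarith [hmem.1]
      have hp2' : p < 1 := by linarith
      have hBpos : 0 < 1 - p ^ 2 := by nlinarith
      rw [Set.indicator_of_mem hmem]
      rw [Dker, if_pos (by rw [hQ]; linarith)]
      rw [hQ]
      have hden : ((1 - v ^ 2) * (1 - p ^ 2) * (1 - u ^ 2)) ^ lam =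
          A ^ lam * (1 - p ^ 2) ^ lam := by
        rw [show (1 - v ^ 2) * (1 - p ^ 2) * (1 - u ^ 2) = A * (1 - p ^ 2) by rw [hA]; ring]
        exact Real.mul_rpow hApos.le hBpos.le
      simp only [hden, hh]
      have hBne : (1 - p ^ 2) ^ lam ≠ 0 := (Real.rpow_pos_of_pos hBpos lam).ne'
      rw [← div_div, div_mul_cancel₀ _ hBne]
    · rw [Set.indicator_of_notMem hmem]
      rw [Set.mem_Ioc] at hmem
      have hor : p < c - s ∨ c + s < p := by
        rcases not_and_or.mp hmem with h' | h'
        · left; exact lt_of_le_of_ne (not_lt.mp h') hp1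
        · right; exact not_le.mp h'
      have hQneg : s ^ 2 - (p - c) ^ 2 < 0 := by
        rcases hor with h' | h'
        · have := mul_pos (show 0 < s - (p - c) by linarith) (show 0 < -(s + (p - c)) by linarith)
          nlinarith [this]
        · have := mul_pos (show 0 < (p - c) - s by linarith) (show 0 < (p - c) + s by linarith)
          nlinarith [this]
      rw [Dker, if_neg (by rw [hQ]; linarith), zero_mul]
  rw [step1]
  -- step 2: substitution p = s*t + c
  have step2 : ∫ p in (c - s)..(c + s), h p = s * ∫ t in (-1:ℝ)..1, h (s * t + c) := by
    have hsm := intervalIntegral.smul_integral_comp_mul_add (f := h) (a := -1) (b := 1) s c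
    rw [show s * (-1) + c = c - s by ring, show s * 1 + c = c + s by ring] at hsm
    rw [← hsm, smul_eq_mul]
  rw [step2]
  -- step 3: the inner integral
  have step3 : ∫ t in (-1:ℝ)..1, h (s * t + c) =
      ((s ^ 2) ^ (lam - 1 / 2) / A ^ lam) * ∫ t in (-1:ℝ)..1, (1 - t ^ 2) ^ (lam - 1 / 2) := by
    rw [← intervalIntegral.integral_const_mul]
    refine intervalIntegral.integral_congr fun t ht => ?_
    rw [Set.uIcc_of_le (by norm_num : (-1:ℝ) ≤ 1)] at ht
    have ht2 : 0 ≤ 1 - t ^ 2 := by nlinarith [ht.1, ht.2]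
    simp only [hh]
    have : s ^ 2 - (s * t + c - c) ^ 2 = s ^ 2 * (1 - t ^ 2) := by ring
    rw [this, Real.mul_rpow (sq_nonneg s) ht2]
    ring
  rw [step3]
  have hscalar : s * ((s ^ 2) ^ (lam - 1 / 2) / A ^ lam) = 1 := by
    rw [← hs2, ← Real.rpow_natCast s 2, ← Real.rpow_mul hs.le, ← Real.rpow_mul hs.le]
    push_cast
    nth_rewrite 1 [show s = s ^ (1:ℝ) by rw [Real.rpow_one]]
    rw [← Real.rpow_sub hs, ← Real.rpow_add hs,
      show (1:ℝ) + (2 * (lam - 1/2) - 2 * lam) = 0 by ring, Real.rpow_zero]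
  rw [← mul_assoc, hscalar, one_mul]
  exact integral_one_sub_sq_rpow lam hlam
end

section
/- Let f : [-1,1] → ℝ be integrable against the weight (1-u²)^{(d-2)/2+μ} and let v ∈ [-1,1], μ ≥ 0, d ≥ 2. Then ∫_{-1}^1 ∫_{-1}^1 |f(p v + √(1-v²)√(1-p²) s)| (1-p²)^{(d-2)/2+μ} (1-s²)^{(d-3)/2+μ} ds dp ≤ c ∫_{-1}^1 |f(u)| (1-u²)^{(d-2)/2+μ} du, where c depends only on d and μ. -/
set_option maxHeartbeats 1000000
open Real MeasureTheory Set ENNReal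

lemma lint_affine {c : ℝ} (hc : 0 < c) (b : ℝ) {g : ℝ → ℝ≥0∞} (hg : Measurable g) :
    ∫⁻ x, g (b + c * x) = ENNReal.ofReal c⁻¹ * ∫⁻ u, g u := by
  calc ∫⁻ x, g (b + c * x)
      = ∫⁻ y, g (b + y) ∂(Measure.map (c * ·) volume) :=
        (lintegral_map (hg.comp (measurable_const_add b)) (measurable_const_mul c)).symm
    _ = ENNReal.ofReal c⁻¹ * ∫⁻ y, g (b + y) := by
        rw [Real.map_volume_mul_left hc.ne', lintegral_smul_measure, abs_of_pos (inv_pos.2 hc), smul_eq_mul]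
    _ = ENNReal.ofReal c⁻¹ * ∫⁻ u, g u := by
        congr 1
        exact lintegral_add_left_eq_self (fun y => g y) b

lemma lint_affine_Ioo {c : ℝ} (hc : 0 < c) (b l r : ℝ) {g : ℝ → ℝ≥0∞} (hg : Measurable g) :
    ∫⁻ x in Ioo l r, g (b + c * x)
      = ENNReal.ofReal c⁻¹ * ∫⁻ u in Ioo (b + c * l) (b + c * r), g u := by
  rw [← lintegral_indicator measurableSet_Ioo, ← lintegral_indicator measurableSet_Ioo]
  have key : (fun x => (Ioo l r).indicator (fun x => g (b + c * x)) x)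
      = fun x => (Ioo (b + c * l) (b + c * r)).indicator g (b + c * x) := by
    funext x
    by_cases hx : x ∈ Ioo l r
    · rw [indicator_of_mem hx, indicator_of_mem]
      exact ⟨by nlinarith [hx.1], by nlinarith [hx.2]⟩
    · rw [indicator_of_notMem hx, indicator_of_notMem]
      intro hmem
      exact hx ⟨by nlinarith [hmem.1], by nlinarith [hmem.2]⟩
  rw [key, lint_affine hc b (hg.indicator measurableSet_Ioo)]

lemma inner_bound (f : ℝ → ℝ) (hf : Measurable f) (α β : ℝ) (hab : α = β + 1/2)
    (v p : ℝ) (hv : v ∈ Icc (-1:ℝ) 1) (hw0 : 0 < Real.sqrt (1 - v^2))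
    (hp : p ∈ Ioo (-1:ℝ) 1) :
    ∫⁻ s in Ioc (-1:ℝ) 1, ENNReal.ofReal
        (|f (p * v + Real.sqrt (1 - v^2) * Real.sqrt (1 - p^2) * s)| * (1 - p^2) ^ α * (1 - s^2) ^ β)
      ≤ ∫⁻ u in Ioc (-1:ℝ) 1, ENNReal.ofReal (|f u| * Real.sqrt (1 - v^2) ^ (-(2*β+1)) *
          (if (p - u*v)^2 < (1 - v^2)*(1 - u^2) then ((1 - v^2)*(1 - u^2) - (p - u*v)^2) ^ β else 0)) := by
  set w : ℝ := Real.sqrt (1 - v^2) with hw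
  set q : ℝ := Real.sqrt (1 - p^2) with hqdef
  have hq0 : 0 < q := Real.sqrt_pos.2 (by nlinarith [hp.1, hp.2])
  have hq2 : q^2 = 1 - p^2 := Real.sq_sqrt (by nlinarith [hp.1, hp.2])
  have hw2 : w^2 = 1 - v^2 := Real.sq_sqrt (by nlinarith [hv.1, hv.2])
  set a : ℝ := w * q with hadef
  have ha : 0 < a := mul_pos hw0 hq0
  set D : ℝ := (1 - p^2)^α * (a^2)^(-β) with hD
  let Φ : ℝ → ℝ := fun u => |f u| * D * (if (u - p*v)^2 < a^2 then (a^2 - (u - p*v)^2)^β else 0)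
  have hPhi : Φ = fun u => |f u| * D * (if (u - p*v)^2 < a^2 then (a^2 - (u - p*v)^2)^β else 0) := rfl
  have hΦm : Measurable fun u => ENNReal.ofReal (Φ u) := by
    apply Measurable.ennreal_ofReal
    apply Measurable.mul
    · exact (hf.abs.mul measurable_const)
    · exact Measurable.ite (measurableSet_lt (by measurability) measurable_const)
        (by measurability) measurable_const
  -- key identity
  have hE : ∀ u : ℝ, a^2 - (u - p*v)^2 = (1 - v^2)*(1 - u^2) - (p - u*v)^2 := by
    intro u
    have : a^2 = w^2 * q^2 := by rw [hadef]; ring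
    rw [this]
    linear_combination (q^2) * hw2 + (1 - v^2) * hq2
  have hconst : a⁻¹ * D = w ^ (-(2*β+1)) := by
    have ha2 : (a^2 : ℝ) = w^2 * q^2 := by rw [hadef]; ring
    have e1 : (1 - p^2)^α = q ^ (2*α) := by
      rw [← hq2, ← Real.rpow_natCast q 2, ← Real.rpow_mul hq0.le]
      norm_num
    have e2 : (a^2 : ℝ)^(-β) = w ^ (2*(-β)) * q ^ (2*(-β)) := by
      rw [ha2, Real.mul_rpow (by positivity) (by positivity), ← Real.rpow_natCast w 2,
        ← Real.rpow_mul hw0.le, ← Real.rpow_natCast q 2, ← Real.rpow_mul hq0.le]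
      norm_num
    have e3 : a⁻¹ = w ^ (-1:ℝ) * q ^ (-1:ℝ) := by
      rw [hadef, mul_inv, Real.rpow_neg_one, Real.rpow_neg_one]
    rw [hD, e1, e2, e3]
    rw [show w ^ (-1:ℝ) * q ^ (-1:ℝ) * (q ^ (2*α) * (w ^ (2*(-β)) * q ^ (2*(-β))))
        = (w ^ (-1:ℝ) * w ^ (2*(-β))) * (q ^ (-1:ℝ) * (q ^ (2*α) * q ^ (2*(-β)))) from by ring]
    rw [← Real.rpow_add hw0, ← Real.rpow_add hq0, ← Real.rpow_add hq0]
    rw [hab]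
    rw [show (-1 + (2 * (β + 1/2) + 2 * -β) : ℝ) = 0 from by ring, Real.rpow_zero, mul_one]
    congr 1
    ring

  -- main calc
  have hub : p*v + a ≤ 1 := by nlinarith [sq_nonneg (p - v), sq_nonneg (q - w), hq2, hw2]
  have hlb : (-1:ℝ) ≤ p*v - a := by nlinarith [sq_nonneg (p + v), sq_nonneg (q - w), hq2, hw2]
  have hsub : Ioo (p*v + a * (-1)) (p*v + a * 1) ⊆ Ioo (-1:ℝ) 1 := by
    intro x hx
    obtain ⟨h1, h2⟩ := hx
    constructor
    · nlinarith
    · nlinarith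
  have hDval : D * (a^2)^β = (1-p^2)^α := by
    rw [hD, mul_assoc, ← Real.rpow_add (by positivity : (0:ℝ) < a^2)]
    norm_num
  have hTm : Measurable fun u => ENNReal.ofReal (|f u| * w ^ (-(2*β+1)) *
      (if (p - u*v)^2 < (1 - v^2)*(1 - u^2) then ((1 - v^2)*(1 - u^2) - (p - u*v)^2) ^ β else 0)) := by
    apply Measurable.ennreal_ofReal
    apply Measurable.mul
    · exact hf.abs.mul measurable_const
    · exact Measurable.ite (measurableSet_lt (by measurability) (by measurability))
        (by measurability) measurable_const
  calc ∫⁻ s in Ioc (-1:ℝ) 1, ENNReal.ofReal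
        (|f (p * v + w * q * s)| * (1 - p^2) ^ α * (1 - s^2) ^ β)
      = ∫⁻ s in Ioo (-1:ℝ) 1, ENNReal.ofReal
        (|f (p * v + w * q * s)| * (1 - p^2) ^ α * (1 - s^2) ^ β) := by
        rw [Measure.restrict_congr_set Ioo_ae_eq_Ioc]
    _ = ∫⁻ s in Ioo (-1:ℝ) 1, ENNReal.ofReal (Φ (p*v + a * s)) := by
        apply setLIntegral_congr_fun measurableSet_Ioo
        intro s hs
        obtain ⟨hs1, hs2⟩ := hs
        have hcond : ((p*v + a*s) - p*v)^2 < a^2 := by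
          nlinarith [mul_pos (mul_pos ha ha) (show (0:ℝ) < 1 - s^2 by nlinarith)]
        have h1s2 : (0:ℝ) ≤ 1 - s^2 := by nlinarith
        congr 1
        rw [hPhi]
        simp only []
        rw [if_pos hcond]
        have hval : (a^2 - ((p*v + a*s) - p*v)^2) ^ β = (a^2)^β * (1 - s^2)^β := by
          rw [show a^2 - ((p*v + a*s) - p*v)^2 = a^2 * (1 - s^2) from by ring,
            Real.mul_rpow (sq_nonneg a) h1s2]
        rw [hval, show |f (p*v + a*s)| * D * ((a^2)^β * (1-s^2)^β)
            = |f (p*v + a*s)| * (D * (a^2)^β) * (1-s^2)^β from by ring, hDval]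
    _ = ENNReal.ofReal a⁻¹ * ∫⁻ u in Ioo (p*v + a * (-1)) (p*v + a * 1),
          ENNReal.ofReal (Φ u) := lint_affine_Ioo (g := fun u => ENNReal.ofReal (Φ u)) ha (p*v) (-1) 1 hΦm
    _ ≤ ENNReal.ofReal a⁻¹ * ∫⁻ u in Ioo (-1:ℝ) 1, ENNReal.ofReal (Φ u) :=
        mul_le_mul_right (lintegral_mono_set hsub) _
    _ = ∫⁻ u in Ioo (-1:ℝ) 1, ENNReal.ofReal (a⁻¹ * Φ u) := by
        rw [← lintegral_const_mul _ hΦm]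
        congr 1
        funext u
        rw [ENNReal.ofReal_mul (inv_nonneg.2 ha.le)]
    _ = ∫⁻ u in Ioo (-1:ℝ) 1, ENNReal.ofReal (|f u| * w ^ (-(2*β+1)) *
          (if (p - u*v)^2 < (1 - v^2)*(1 - u^2) then ((1 - v^2)*(1 - u^2) - (p - u*v)^2) ^ β else 0)) := by
        congr 1
        funext u
        congr 1
        rw [hPhi]
        simp only []
        by_cases hcnd : (u - p*v)^2 < a^2
        · rw [if_pos hcnd, if_pos (by nlinarith [hE u])]
          rw [show a⁻¹ * (|f u| * D * (a^2 - (u - p*v)^2)^β)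
              = |f u| * (a⁻¹ * D) * (a^2 - (u - p*v)^2)^β from by ring, hconst, hE u]
        · rw [if_neg hcnd, if_neg (by intro h; exact hcnd (by nlinarith [hE u]))]
          ring
    _ = ∫⁻ u in Ioc (-1:ℝ) 1, ENNReal.ofReal (|f u| * w ^ (-(2*β+1)) *
          (if (p - u*v)^2 < (1 - v^2)*(1 - u^2) then ((1 - v^2)*(1 - u^2) - (p - u*v)^2) ^ β else 0)) := by
        rw [Measure.restrict_congr_set Ioo_ae_eq_Ioc]

lemma weight_integrable {β : ℝ} (hβ : -1 < β) :
    IntegrableOn (fun t : ℝ => (1 - t ^ 2) ^ β) (Ioo (-1 : ℝ) 1) := by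
  have h1 : IntervalIntegrable (fun t : ℝ => (1 - t) ^ β) volume (-1) 1 := by
    have := (intervalIntegral.intervalIntegrable_rpow' (a := 2) (b := 0) hβ).comp_sub_left 1
    norm_num at this
    exact this
  have h2 : IntervalIntegrable (fun t : ℝ => (1 + t) ^ β) volume (-1) 1 := by
    have := (intervalIntegral.intervalIntegrable_rpow' (a := 0) (b := 2) hβ).comp_add_left 1
    norm_num at this
    exact this
  have hmaj : IntegrableOn (fun t : ℝ => (1 - t) ^ β + (1 + t) ^ β) (Ioo (-1 : ℝ) 1) := by
    have := (h1.add h2)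
    rw [intervalIntegrable_iff'] at this
    exact this.mono_set (by rw [Set.uIcc_of_le (by norm_num : (-1:ℝ) ≤ 1)]; exact Ioo_subset_Icc_self)
  set C : ℝ := max 1 (2 ^ β) with hC
  have hC0 : 0 ≤ C := le_trans zero_le_one (le_max_left _ _)
  apply Integrable.mono' (hmaj.const_mul C)
  · exact (by measurability : Measurable fun t : ℝ => (1 - t ^ 2) ^ β).aestronglyMeasurable
  · filter_upwards [self_mem_ae_restrict measurableSet_Ioo] with t ht
    obtain ⟨ht1, ht2⟩ := ht
    have hb1 : (0:ℝ) < 1 - t := by linarith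
    have hb2 : (0:ℝ) < 1 + t := by linarith
    have hfac : (1 - t ^ 2 : ℝ) = (1 - t) * (1 + t) := by ring
    have hsplit : (1 - t ^ 2) ^ β = (1 - t) ^ β * (1 + t) ^ β := by
      rw [hfac, Real.mul_rpow hb1.le hb2.le]
    have habs : |(1 - t ^ 2) ^ β| = (1 - t ^ 2) ^ β :=
      abs_of_nonneg (Real.rpow_nonneg (by nlinarith) β)
    have hbnd : ∀ x : ℝ, 1 ≤ x → x ≤ 2 → x ^ β ≤ C := by
      intro x hx1 hx2
      rcases le_or_gt 0 β with hb | hb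
      · exact le_trans (Real.rpow_le_rpow (by linarith) hx2 hb) (le_max_right _ _)
      · exact le_trans (Real.rpow_le_one_of_one_le_of_nonpos hx1 hb.le) (le_max_left _ _)
    have hnn1 : (0:ℝ) ≤ (1 - t) ^ β := Real.rpow_nonneg hb1.le β
    have hnn2 : (0:ℝ) ≤ (1 + t) ^ β := Real.rpow_nonneg hb2.le β
    rw [Real.norm_eq_abs, habs, hsplit]
    rcases le_or_gt t 0 with h | h
    · have : (1 - t) ^ β ≤ C := hbnd _ (by linarith) (by linarith)
      calc (1 - t) ^ β * (1 + t) ^ β ≤ C * (1 + t) ^ β := by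
            exact mul_le_mul_of_nonneg_right this hnn2
        _ ≤ C * ((1 - t) ^ β + (1 + t) ^ β) := by nlinarith
    · have : (1 + t) ^ β ≤ C := hbnd _ (by linarith) (by linarith)
      calc (1 - t) ^ β * (1 + t) ^ β ≤ (1 - t) ^ β * C := by
            exact mul_le_mul_of_nonneg_left this hnn1
        _ ≤ C * ((1 - t) ^ β + (1 + t) ^ β) := by nlinarith

lemma J_bound (β : ℝ) (v u : ℝ) (hw0 : 0 < Real.sqrt (1 - v^2)) (hu : u ∈ Ioo (-1:ℝ) 1) :
    ∫⁻ p in Ioo (-1:ℝ) 1, ENNReal.ofReal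
        (if (p - u*v)^2 < (1 - v^2)*(1 - u^2) then ((1 - v^2)*(1 - u^2) - (p - u*v)^2) ^ β else 0)
      ≤ ENNReal.ofReal ((Real.sqrt (1 - v^2)) ^ (2*β+1) * (1 - u^2) ^ (β + 1/2))
          * ∫⁻ t in Ioo (-1:ℝ) 1, ENNReal.ofReal ((1 - t^2) ^ β) := by
  set w : ℝ := Real.sqrt (1 - v^2) with hwdef
  set r : ℝ := Real.sqrt (1 - u^2) with hrdef
  have hr0 : 0 < r := Real.sqrt_pos.2 (by nlinarith [hu.1, hu.2])
  have hr2 : r^2 = 1 - u^2 := Real.sq_sqrt (by nlinarith [hu.1, hu.2])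
  have hw2 : w^2 = 1 - v^2 := Real.sq_sqrt (by nlinarith [Real.sqrt_pos.1 hw0])
  set m : ℝ := w * r with hmdef
  have hm : 0 < m := mul_pos hw0 hr0
  have hm2 : m^2 = (1 - v^2) * (1 - u^2) := by rw [hmdef, mul_pow, hr2, hw2]
  have hgm : Measurable fun p : ℝ => ENNReal.ofReal ((m^2 - (p - u*v)^2) ^ β) := by
    measurability
  calc ∫⁻ p in Ioo (-1:ℝ) 1, ENNReal.ofReal
        (if (p - u*v)^2 < (1 - v^2)*(1 - u^2) then ((1 - v^2)*(1 - u^2) - (p - u*v)^2) ^ β else 0)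
      ≤ ∫⁻ p, ENNReal.ofReal
        (if (p - u*v)^2 < (1 - v^2)*(1 - u^2) then ((1 - v^2)*(1 - u^2) - (p - u*v)^2) ^ β else 0) :=
        setLIntegral_le_lintegral _ _
    _ = ∫⁻ p, (Ioo (u*v - m) (u*v + m)).indicator
          (fun p => ENNReal.ofReal ((m^2 - (p - u*v)^2) ^ β)) p := by
        apply lintegral_congr
        intro p
        by_cases hmem : p ∈ Ioo (u*v - m) (u*v + m)
        · rw [indicator_of_mem hmem, if_pos (by obtain ⟨h1, h2⟩ := hmem; nlinarith), hm2]
        · rw [indicator_of_notMem hmem, if_neg, ENNReal.ofReal_zero]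
          intro hlt
          exact hmem ⟨by nlinarith, by nlinarith⟩
    _ = ∫⁻ p in Ioo (u*v - m) (u*v + m), ENNReal.ofReal ((m^2 - (p - u*v)^2) ^ β) :=
        lintegral_indicator measurableSet_Ioo _
    _ = ENNReal.ofReal m * ∫⁻ t in Ioo (-1:ℝ) 1,
          ENNReal.ofReal ((m^2 - ((u*v + m*t) - u*v)^2) ^ β) := by
        have haff := lint_affine_Ioo hm (u*v) (-1) 1 hgm
        rw [show u*v + m * (-1) = u*v - m from by ring, show u*v + m * 1 = u*v + m from by ring]
          at haff
        rw [haff, ← mul_assoc, ← ENNReal.ofReal_mul hm.le, mul_inv_cancel₀ hm.ne',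
          ENNReal.ofReal_one, one_mul]
    _ = ENNReal.ofReal m * ∫⁻ t in Ioo (-1:ℝ) 1,
          (ENNReal.ofReal ((m^2)^β) * ENNReal.ofReal ((1 - t^2) ^ β)) := by
        congr 1
        apply setLIntegral_congr_fun measurableSet_Ioo
        intro t ht
        beta_reduce
        rw [show m^2 - ((u*v + m*t) - u*v)^2 = m^2 * (1 - t^2) from by ring,
          Real.mul_rpow (sq_nonneg m) (by nlinarith [ht.1, ht.2]),
          ENNReal.ofReal_mul (Real.rpow_nonneg (sq_nonneg m) β)]
    _ = (ENNReal.ofReal m * ENNReal.ofReal ((m^2)^β)) *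
          ∫⁻ t in Ioo (-1:ℝ) 1, ENNReal.ofReal ((1 - t^2) ^ β) := by
        rw [lintegral_const_mul _ (by measurability), mul_assoc]
    _ = ENNReal.ofReal (w ^ (2*β+1) * (1 - u^2) ^ (β + 1/2)) *
          ∫⁻ t in Ioo (-1:ℝ) 1, ENNReal.ofReal ((1 - t^2) ^ β) := by
        congr 1
        rw [← ENNReal.ofReal_mul hm.le]
        congr 1
        have e1 : (m^2 : ℝ)^β = w ^ (2*β) * r ^ (2*β) := by
          rw [show (m^2:ℝ) = w^2 * r^2 from by rw [hmdef]; ring,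
            Real.mul_rpow (by positivity) (by positivity), ← Real.rpow_natCast w 2,
            ← Real.rpow_mul hw0.le, ← Real.rpow_natCast r 2, ← Real.rpow_mul hr0.le]
          norm_num
        have e2 : (1 - u^2 : ℝ) ^ (β + 1/2) = r ^ (2*β + 1) := by
          rw [← hr2, ← Real.rpow_natCast r 2, ← Real.rpow_mul hr0.le]
          congr 1
          ring
        rw [e1, e2, hmdef]
        rw [show w * r * (w ^ (2*β) * r ^ (2*β)) = (w * w ^ (2*β)) * (r * r ^ (2*β)) from by ring]
        rw [show (w : ℝ) * w ^ (2*β) = w ^ (1:ℝ) * w ^ (2*β) from by rw [Real.rpow_one],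
          ← Real.rpow_add hw0,
          show (r : ℝ) * r ^ (2*β) = r ^ (1:ℝ) * r ^ (2*β) from by rw [Real.rpow_one],
          ← Real.rpow_add hr0]
        rw [show (1 + 2*β : ℝ) = 2*β + 1 from by ring]


/-- For `d ≥ 2`, `μ ≥ 0` there is a constant `c = c(d,μ)` such that for every
`v ∈ [-1,1]` and every measurable `f` with `|f(u)|(1-u²)^{(d-2)/2+μ}` integrable,
`∫_{-1}^1 ∫_{-1}^1 |f(pv + √(1-v²)√(1-p²) s)| (1-p²)^{(d-2)/2+μ} (1-s²)^{(d-3)/2+μ} ds dp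
  ≤ c ∫_{-1}^1 |f(u)| (1-u²)^{(d-2)/2+μ} du`. -/
theorem double_integral_bound (d : ℕ) (hd : 2 ≤ d) (μ : ℝ) (hμ : 0 ≤ μ) :
    ∃ c : ℝ, ∀ f : ℝ → ℝ, Measurable f →
      IntegrableOn (fun u => |f u| * (1 - u ^ 2) ^ (((d : ℝ) - 2) / 2 + μ))
        (Set.Icc (-1 : ℝ) 1) →
      ∀ v ∈ Set.Icc (-1 : ℝ) 1,
        (∫ p in (-1 : ℝ)..1, ∫ s in (-1 : ℝ)..1,
            |f (p * v + Real.sqrt (1 - v ^ 2) * Real.sqrt (1 - p ^ 2) * s)| *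
              (1 - p ^ 2) ^ (((d : ℝ) - 2) / 2 + μ) *
              (1 - s ^ 2) ^ (((d : ℝ) - 3) / 2 + μ)) ≤
          c * ∫ u in (-1 : ℝ)..1, |f u| * (1 - u ^ 2) ^ (((d : ℝ) - 2) / 2 + μ) := by
  set α : ℝ := ((d : ℝ) - 2) / 2 + μ with hαdef
  set β : ℝ := ((d : ℝ) - 3) / 2 + μ with hβdef
  have hd2 : (2:ℝ) ≤ (d:ℝ) := by exact_mod_cast hd
  have hab : α = β + 1/2 := by rw [hαdef, hβdef]; ring
  have hβ1 : -1 < β := by rw [hβdef]; linarith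
  set Iβ : ℝ≥0∞ := ∫⁻ t in Ioo (-1:ℝ) 1, ENNReal.ofReal ((1 - t^2) ^ β) with hIβdef
  have hIβtop : Iβ ≠ ⊤ := (weight_integrable hβ1).lintegral_lt_top.ne
  refine ⟨Iβ.toReal, ?_⟩
  intro f hf hInt v hv
  set g : ℝ → ℝ := fun u => |f u| * (1 - u ^ 2) ^ α with hgdef
  set RHS : ℝ := ∫ u in (-1:ℝ)..1, g u with hRHSdef
  have hgm : Measurable g := by
    apply Measurable.mul hf.abs
    measurability
  have hgnn : ∀ u ∈ Icc (-1:ℝ) 1, 0 ≤ g u := fun u hu =>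
    mul_nonneg (abs_nonneg _) (Real.rpow_nonneg (by nlinarith [hu.1, hu.2]) _)
  have hRHS0 : 0 ≤ RHS :=
    intervalIntegral.integral_nonneg (by norm_num) hgnn
  have hgInt : IntegrableOn g (Ioc (-1:ℝ) 1) := hInt.mono_set Ioc_subset_Icc_self
  have hglint : ∫⁻ u in Ioc (-1:ℝ) 1, ENNReal.ofReal (g u) = ENNReal.ofReal RHS := by
    rw [hRHSdef, intervalIntegral.integral_of_le (by norm_num : (-1:ℝ) ≤ 1)]
    exact (ofReal_integral_eq_lintegral_ofReal hgInt
      ((ae_restrict_iff' measurableSet_Ioc).2 (ae_of_all _ fun u hu =>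
        hgnn u (Ioc_subset_Icc_self hu)))).symm
  by_cases hvsq : 1 - v^2 = 0
  · -- degenerate case : v = 1 or v = -1
    simp only [hvsq, Real.sqrt_zero, zero_mul, add_zero]
    set Cs : ℝ := ∫ s in (-1:ℝ)..1, (1 - s^2) ^ β with hCsdef
    have hLHS : (∫ p in (-1:ℝ)..1, ∫ s in (-1:ℝ)..1,
        |f (p * v)| * (1 - p^2) ^ α * (1 - s^2) ^ β)
        = (∫ p in (-1:ℝ)..1, |f (p * v)| * (1 - p^2) ^ α) * Cs := by
      rw [← intervalIntegral.integral_mul_const]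
      apply intervalIntegral.integral_congr
      intro p _
      exact intervalIntegral.integral_const_mul _ _
    have hCs : Cs = Iβ.toReal := by
      rw [hCsdef, intervalIntegral.integral_of_le (by norm_num : (-1:ℝ) ≤ 1),
        integral_eq_lintegral_of_nonneg_ae
          ((ae_restrict_iff' measurableSet_Ioc).2 (ae_of_all _ fun s hs =>
            Real.rpow_nonneg (by nlinarith [hs.1, hs.2]) _))
          ((by measurability : Measurable fun s : ℝ => (1 - s ^ 2) ^ β).aestronglyMeasurable),
        hIβdef, ← Measure.restrict_congr_set Ioo_ae_eq_Ioc]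
    have hIv : (∫ p in (-1:ℝ)..1, |f (p * v)| * (1 - p^2) ^ α) = RHS := by
      have hv1 : (v - 1) * (v + 1) = 0 := by nlinarith
      rcases mul_eq_zero.1 hv1 with h | h
      · have hv' : v = 1 := by linarith
        rw [hv']
        simp only [mul_one]
        rfl
      · have hv' : v = -1 := by linarith
        rw [hv']
        have : (fun p : ℝ => |f (p * -1)| * (1 - p^2) ^ α) = fun p : ℝ => g (-p) := by
          funext p
          rw [hgdef]
          simp only [mul_neg_one, neg_sq]
        rw [this]
        have := intervalIntegral.integral_comp_neg (a := (-1:ℝ)) (b := 1) g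
        simpa [hRHSdef] using this
    rw [hLHS, hIv, hCs, mul_comm]
  · -- main case
    have hw0 : 0 < Real.sqrt (1 - v^2) := by
      have h1 : 0 ≤ 1 - v^2 := by nlinarith [hv.1, hv.2]
      rcases lt_or_eq_of_le h1 with h | h
      · exact Real.sqrt_pos.2 h
      · exact absurd h.symm hvsq
    set w0 : ℝ := Real.sqrt (1 - v^2) with hw0def
    set F : ℝ → ℝ → ℝ := fun p s =>
      |f (p * v + w0 * Real.sqrt (1 - p ^ 2) * s)| * (1 - p ^ 2) ^ α * (1 - s ^ 2) ^ β with hFdef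
    have hrpa : Measurable fun y : ℝ => (1 - y^2) ^ α := by measurability
    have hrpb : Measurable fun y : ℝ => (1 - y^2) ^ β := by measurability
    have hmarg : Measurable fun x : ℝ × ℝ => x.1 * v + w0 * Real.sqrt (1 - x.1 ^ 2) * x.2 := by
      apply Measurable.add
      · exact measurable_fst.mul measurable_const
      · exact (measurable_const.mul
          ((measurable_const.sub (measurable_fst.pow measurable_const)).sqrt)).mul measurable_snd
    have hFm : Measurable (Function.uncurry F) :=
      (((hf.comp hmarg).abs.mul (hrpa.comp measurable_fst)).mul (hrpb.comp measurable_snd))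
    set Ψ : ℝ → ℝ → ℝ := fun p u => |f u| * w0 ^ (-(2*β+1)) *
        (if (p - u*v)^2 < (1 - v^2)*(1 - u^2) then ((1 - v^2)*(1 - u^2) - (p - u*v)^2) ^ β else 0)
      with hΨdef
    have hrpow : Measurable fun y : ℝ => y ^ β := by measurability
    have hq1 : Measurable fun x : ℝ × ℝ => (x.1 - x.2*v)^2 :=
      (measurable_fst.sub (measurable_snd.mul measurable_const)).pow measurable_const
    have hq2 : Measurable fun x : ℝ × ℝ => (1 - v^2)*(1 - x.2^2) :=
      measurable_const.mul (measurable_const.sub (measurable_snd.pow measurable_const))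
    have hΨm : Measurable (fun x : ℝ × ℝ => ENNReal.ofReal (Ψ x.1 x.2)) := by
      apply Measurable.ennreal_ofReal
      apply Measurable.mul
      · exact ((hf.comp measurable_snd).abs.mul measurable_const)
      · exact Measurable.ite (measurableSet_lt hq1 hq2)
          (hrpow.comp (hq2.sub hq1)) measurable_const
    have hInnerTm : Measurable fun p => ∫⁻ u in Ioc (-1:ℝ) 1, ENNReal.ofReal (Ψ p u) :=
      Measurable.lintegral_prod_right' hΨm
    -- nonnegativity of F on the box
    have hFnn : ∀ p ∈ Ioc (-1:ℝ) 1, ∀ s ∈ Icc (-1:ℝ) 1, 0 ≤ F p s := by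
      intro p hp s hs
      exact mul_nonneg (mul_nonneg (abs_nonneg _)
        (Real.rpow_nonneg (by nlinarith [hp.1, hp.2]) _))
        (Real.rpow_nonneg (by nlinarith [hs.1, hs.2]) _)
    set R : ℝ → ℝ := fun p => ∫ s in (-1:ℝ)..1, F p s with hRdef
    have hRioc : R = fun p => ∫ s in Ioc (-1:ℝ) 1, F p s := by
      funext p
      exact intervalIntegral.integral_of_le (by norm_num)
    have hRsm : StronglyMeasurable R := by
      rw [hRioc]
      exact hFm.stronglyMeasurable.integral_prod_right'
    have hRnn : ∀ p ∈ Ioc (-1:ℝ) 1, 0 ≤ R p := fun p hp =>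
      intervalIntegral.integral_nonneg (by norm_num) (hFnn p hp)
    -- pointwise bound for p in Ioo
    have hpoint : ∀ p ∈ Ioo (-1:ℝ) 1,
        ENNReal.ofReal (R p) ≤ ∫⁻ u in Ioc (-1:ℝ) 1, ENNReal.ofReal (Ψ p u) := by
      intro p hp
      have h1 : ENNReal.ofReal (R p) ≤ ∫⁻ s in Ioc (-1:ℝ) 1, ENNReal.ofReal (F p s) := by
        have heq : R p = (∫⁻ s in Ioc (-1:ℝ) 1, ENNReal.ofReal (F p s)).toReal := by
          rw [hRioc]
          exact integral_eq_lintegral_of_nonneg_ae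
            ((ae_restrict_iff' measurableSet_Ioc).2 (ae_of_all _ fun s hs =>
              hFnn p (Ioo_subset_Ioc_self hp) s (Ioc_subset_Icc_self hs)))
            ((hFm.comp (measurable_prodMk_left)).aestronglyMeasurable)
        rw [heq]
        exact ENNReal.ofReal_toReal_le
      refine h1.trans ?_
      exact inner_bound f hf α β hab v p hv hw0 hp
    -- the double lintegral bound
    have hswap : ∫⁻ p in Ioo (-1:ℝ) 1, ∫⁻ u in Ioc (-1:ℝ) 1, ENNReal.ofReal (Ψ p u)
        = ∫⁻ u in Ioc (-1:ℝ) 1, ∫⁻ p in Ioo (-1:ℝ) 1, ENNReal.ofReal (Ψ p u) :=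
      lintegral_lintegral_swap hΨm.aemeasurable
    have hJ : ∀ u ∈ Ioo (-1:ℝ) 1,
        (∫⁻ p in Ioo (-1:ℝ) 1, ENNReal.ofReal (Ψ p u))
          ≤ ENNReal.ofReal (g u) * Iβ := by
      intro u hu
      have hpull : (∫⁻ p in Ioo (-1:ℝ) 1, ENNReal.ofReal (Ψ p u))
          = ENNReal.ofReal (|f u| * w0 ^ (-(2*β+1))) *
            ∫⁻ p in Ioo (-1:ℝ) 1, ENNReal.ofReal
              (if (p - u*v)^2 < (1 - v^2)*(1 - u^2)
                then ((1 - v^2)*(1 - u^2) - (p - u*v)^2) ^ β else 0) := by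
        have hq1' : Measurable fun p : ℝ => (p - u*v)^2 :=
          (measurable_id.sub measurable_const).pow measurable_const
        have hmeas : Measurable (fun p : ℝ => ENNReal.ofReal
            (if (p - u*v)^2 < (1 - v^2)*(1 - u^2)
              then ((1 - v^2)*(1 - u^2) - (p - u*v)^2) ^ β else 0)) := by
          apply Measurable.ennreal_ofReal
          exact Measurable.ite (measurableSet_lt hq1' measurable_const)
            (hrpow.comp (measurable_const.sub hq1')) measurable_const
        rw [← lintegral_const_mul _ hmeas]
        apply lintegral_congr
        intro p
        rw [← ENNReal.ofReal_mul (mul_nonneg (abs_nonneg _) (Real.rpow_nonneg (Real.sqrt_nonneg _) _))]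
      rw [hpull]
      have hJb := J_bound β v u hw0 hu
      calc ENNReal.ofReal (|f u| * w0 ^ (-(2*β+1))) *
            ∫⁻ p in Ioo (-1:ℝ) 1, ENNReal.ofReal
              (if (p - u*v)^2 < (1 - v^2)*(1 - u^2)
                then ((1 - v^2)*(1 - u^2) - (p - u*v)^2) ^ β else 0)
          ≤ ENNReal.ofReal (|f u| * w0 ^ (-(2*β+1))) *
            (ENNReal.ofReal (w0 ^ (2*β+1) * (1 - u^2) ^ (β + 1/2)) * Iβ) :=
            mul_le_mul_right hJb _
        _ = ENNReal.ofReal (g u) * Iβ := by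
            rw [← mul_assoc, ← ENNReal.ofReal_mul
              (mul_nonneg (abs_nonneg _) (Real.rpow_nonneg (Real.sqrt_nonneg _) _))]
            congr 2
            have hcancel : w0 ^ (-(2*β+1)) * w0 ^ (2*β+1) = 1 := by
              rw [← Real.rpow_add hw0, show (-(2*β+1) + (2*β+1) : ℝ) = 0 from by ring,
                Real.rpow_zero]
            rw [hgdef]
            calc |f u| * w0 ^ (-(2*β+1)) * (w0 ^ (2*β+1) * (1 - u^2) ^ (β + 1/2))
                = |f u| * (w0 ^ (-(2*β+1)) * w0 ^ (2*β+1)) * (1 - u^2) ^ (β + 1/2) := by ring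
              _ = |f u| * (1 - u^2) ^ α := by rw [hcancel, mul_one, hab]
    -- assemble
    have hmain : (∫⁻ p in Ioc (-1:ℝ) 1, ENNReal.ofReal (R p)) ≤ ENNReal.ofReal RHS * Iβ := by
      calc ∫⁻ p in Ioc (-1:ℝ) 1, ENNReal.ofReal (R p)
          = ∫⁻ p in Ioo (-1:ℝ) 1, ENNReal.ofReal (R p) := by
            rw [Measure.restrict_congr_set Ioo_ae_eq_Ioc]
        _ ≤ ∫⁻ p in Ioo (-1:ℝ) 1, ∫⁻ u in Ioc (-1:ℝ) 1, ENNReal.ofReal (Ψ p u) :=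
            setLIntegral_mono hInnerTm hpoint
        _ = ∫⁻ u in Ioc (-1:ℝ) 1, ∫⁻ p in Ioo (-1:ℝ) 1, ENNReal.ofReal (Ψ p u) := hswap
        _ = ∫⁻ u in Ioo (-1:ℝ) 1, ∫⁻ p in Ioo (-1:ℝ) 1, ENNReal.ofReal (Ψ p u) := by
            rw [Measure.restrict_congr_set Ioo_ae_eq_Ioc]
        _ ≤ ∫⁻ u in Ioo (-1:ℝ) 1, ENNReal.ofReal (g u) * Iβ := by
            apply setLIntegral_mono (by exact (hgm.ennreal_ofReal).mul_const _) hJ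
        _ = (∫⁻ u in Ioo (-1:ℝ) 1, ENNReal.ofReal (g u)) * Iβ :=
            lintegral_mul_const _ hgm.ennreal_ofReal
        _ = (∫⁻ u in Ioc (-1:ℝ) 1, ENNReal.ofReal (g u)) * Iβ := by
            rw [Measure.restrict_congr_set Ioo_ae_eq_Ioc]
        _ = ENNReal.ofReal RHS * Iβ := by rw [hglint]
    -- conclude
    have hLHSeq : (∫ p in (-1:ℝ)..1, ∫ s in (-1:ℝ)..1,
        |f (p * v + w0 * Real.sqrt (1 - p ^ 2) * s)| * (1 - p ^ 2) ^ α * (1 - s ^ 2) ^ β)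
        = (∫⁻ p in Ioc (-1:ℝ) 1, ENNReal.ofReal (R p)).toReal := by
      rw [show (∫ p in (-1:ℝ)..1, ∫ s in (-1:ℝ)..1,
          |f (p * v + w0 * Real.sqrt (1 - p ^ 2) * s)| * (1 - p ^ 2) ^ α * (1 - s ^ 2) ^ β)
          = ∫ p in (-1:ℝ)..1, R p from rfl]
      rw [intervalIntegral.integral_of_le (by norm_num : (-1:ℝ) ≤ 1)]
      exact integral_eq_lintegral_of_nonneg_ae
        ((ae_restrict_iff' measurableSet_Ioc).2 (ae_of_all _ hRnn))
        hRsm.aestronglyMeasurable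
    rw [hLHSeq]
    calc (∫⁻ p in Ioc (-1:ℝ) 1, ENNReal.ofReal (R p)).toReal
        ≤ (ENNReal.ofReal RHS * Iβ).toReal :=
          ENNReal.toReal_mono (ENNReal.mul_ne_top ENNReal.ofReal_ne_top hIβtop) hmain
      _ = RHS * Iβ.toReal := by
          rw [ENNReal.toReal_mul, ENNReal.toReal_ofReal hRHS0]
      _ = Iβ.toReal * RHS := mul_comm _ _
end
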